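/- Let T be a simple left module over R = K⟨x,y⟩/(xy−1). Then either T is annihilated by the two-sided ideal I = ⟨1−yx⟩ (hence T is a simple module over K[X,X^{-1}]), or T is isomorphic to the left ideal S₁ = R(1−yx). -/

import Mathlib

noncomputable section

/-- The defining relation of the Toeplitz/Jacobson algebra: `x * y = 1`. -/
inductive ToeplitzRel (K : Type*) [Field K] :
    FreeAlgebra K (Fin 2) → FreeAlgebra K (Fin 2) → Prop
  | rel : ToeplitzRel K (FreeAlgebra.ι K 0 * FreeAlgebra.ι K 1) 1

/-- The Toeplitz/Jacobson algebra `R = K⟨x,y⟩/(xy-1)`. -/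
abbrev Toeplitz (K : Type*) [Field K] := RingQuot (ToeplitzRel K)

variable (K : Type*) [Field K]

/-- The image of the generator `x` in `R`. -/
def tx : Toeplitz K := RingQuot.mkAlgHom K (ToeplitzRel K) (FreeAlgebra.ι K 0)

/-- The image of the generator `y` in `R`. -/
def ty : Toeplitz K := RingQuot.mkAlgHom K (ToeplitzRel K) (FreeAlgebra.ι K 1)

/-- `f n = y^(n-1) x^(n-1) - y^n x^n`. -/
def tf (n : ℕ) : Toeplitz K := ty K ^ (n-1) * tx K ^ (n-1) - ty K ^ n * tx K ^ n

lemma tx_mul_ty : tx K * ty K = 1 := by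
  rw [tx, ty, ← map_mul]
  have := RingQuot.mkAlgHom_rel K (ToeplitzRel.rel (K := K))
  rw [this, map_one]

/-- shift-down operator on `ℕ →₀ K` -/
def Xop : (ℕ →₀ K) →ₗ[K] (ℕ →₀ K) :=
  Finsupp.lift (ℕ →₀ K) K ℕ (fun n => match n with | 0 => 0 | m+1 => Finsupp.single m 1)

/-- shift-up operator on `ℕ →₀ K` -/
def Yop : (ℕ →₀ K) →ₗ[K] (ℕ →₀ K) :=
  Finsupp.lift (ℕ →₀ K) K ℕ (fun n => Finsupp.single (n+1) 1)

lemma Xop_single_zero (c : K) : Xop K (Finsupp.single 0 c) = 0 := by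
  simp [Xop, Finsupp.lift_apply, Finsupp.sum_single_index]

lemma Xop_single_succ (m : ℕ) (c : K) :
    Xop K (Finsupp.single (m+1) c) = Finsupp.single m c := by
  simp [Xop, Finsupp.lift_apply, Finsupp.sum_single_index, Finsupp.smul_single]

lemma Yop_single (m : ℕ) (c : K) :
    Yop K (Finsupp.single m c) = Finsupp.single (m+1) c := by
  simp [Yop, Finsupp.lift_apply, Finsupp.sum_single_index, Finsupp.smul_single]

lemma Xop_Yop (v : ℕ →₀ K) : Xop K (Yop K v) = v := by
  induction v using Finsupp.induction_linear with
  | zero => simp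
  | add f g hf hg => simp [map_add, hf, hg]
  | single a b => rw [Yop_single, Xop_single_succ]

/-- the representation of the Toeplitz algebra on `ℕ →₀ K` -/
def ρ : Toeplitz K →ₐ[K] Module.End K (ℕ →₀ K) :=
  RingQuot.liftAlgHom K ⟨FreeAlgebra.lift K ![Xop K, Yop K], by
    rintro _ _ ⟨⟩
    rw [map_mul, map_one]
    refine LinearMap.ext fun v => ?_
    simp only [FreeAlgebra.lift_ι_apply, Matrix.cons_val_zero, Matrix.cons_val_one,
      Matrix.head_cons, Module.End.mul_apply, Module.End.one_apply]
    exact Xop_Yop K v⟩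

instance toeplitzModule : Module (Toeplitz K) (ℕ →₀ K) :=
  Module.compHom _ (ρ K).toRingHom

lemma toeplitz_smul_def (r : Toeplitz K) (v : ℕ →₀ K) :
    r • v = ρ K r v := rfl

lemma tx_smul (v : ℕ →₀ K) : tx K • v = Xop K v := by
  rw [toeplitz_smul_def, tx, ρ, RingQuot.liftAlgHom_mkAlgHom_apply, FreeAlgebra.lift_ι_apply]
  rfl

lemma ty_smul (v : ℕ →₀ K) : ty K • v = Yop K v := by
  rw [toeplitz_smul_def, ty, ρ, RingQuot.liftAlgHom_mkAlgHom_apply, FreeAlgebra.lift_ι_apply]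
  rfl

lemma algebraMap_smul' (c : K) (v : ℕ →₀ K) :
    algebraMap K (Toeplitz K) c • v = c • v := by
  rw [toeplitz_smul_def, AlgHom.commutes, Module.algebraMap_end_apply]

lemma Xop_apply (v : ℕ →₀ K) (m : ℕ) : Xop K v m = v (m+1) := by
  induction v using Finsupp.induction_linear with
  | zero => simp
  | add f g hf hg => simp [map_add, hf, hg]
  | single a b =>
    cases a with
    | zero => simp [Xop_single_zero, Finsupp.single_apply]
    | succ k =>
      rw [Xop_single_succ]
      simp [Finsupp.single_apply]

lemma txpow_smul_apply (n : ℕ) (v : ℕ →₀ K) (m : ℕ) :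
    ((tx K ^ n) • v) m = v (m + n) := by
  induction n generalizing v m with
  | zero => simp
  | succ n ih =>
    rw [pow_succ, mul_smul, ih, tx_smul, Xop_apply, Nat.add_assoc]

lemma typow_smul_single (n : ℕ) :
    (ty K ^ n) • (Finsupp.single 0 1 : ℕ →₀ K) = Finsupp.single n 1 := by
  induction n with
  | zero => simp
  | succ n ih => rw [pow_succ', mul_smul, ih, ty_smul, Yop_single]

instance : IsSimpleModule (Toeplitz K) (ℕ →₀ K) := by
  have hnt : Nontrivial (ℕ →₀ K) :=
    nontrivial_of_ne (Finsupp.single 0 1) 0 (by simp)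
  refine { toIsSimpleOrder := ?_ }
  constructor
  intro N
  rw [or_iff_not_imp_left]
  intro hN
  obtain ⟨v, hvN, hv⟩ := Submodule.exists_mem_ne_zero_of_ne_bot hN
  have hsup : v.support.Nonempty := Finsupp.support_nonempty_iff.mpr hv
  set n := v.support.max' hsup with hn
  have hvn : v n ≠ 0 := Finsupp.mem_support_iff.mp (v.support.max'_mem hsup)
  have h01 : (Finsupp.single 0 1 : ℕ →₀ K) ∈ N := by
    have key : (algebraMap K (Toeplitz K) (v n)⁻¹ * tx K ^ n) • v
        = Finsupp.single 0 (1 : K) := by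
      rw [mul_smul, algebraMap_smul']
      ext m
      rw [Finsupp.smul_apply, txpow_smul_apply]
      cases m with
      | zero => simp [inv_mul_cancel₀ hvn]
      | succ k =>
        have hz : v (k + 1 + n) = 0 := by
          apply Finsupp.notMem_support_iff.mp
          intro h
          have := v.support.le_max' _ h
          omega
        simp [hz]
    rw [← key]
    exact N.smul_mem _ hvN
  have hsingle : ∀ (m : ℕ) (c : K), (Finsupp.single m c : ℕ →₀ K) ∈ N := by
    intro m c
    have key : (algebraMap K (Toeplitz K) c * ty K ^ m) • (Finsupp.single 0 1 : ℕ →₀ K)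
        = Finsupp.single m c := by
      rw [mul_smul, typow_smul_single, algebraMap_smul', Finsupp.smul_single, smul_eq_mul,
        mul_one]
    rw [← key]
    exact N.smul_mem _ h01
  rw [eq_top_iff]
  intro w hw
  clear hw
  induction w using Finsupp.induction with
  | zero => exact N.zero_mem
  | single_add a b f _ _ ih => exact N.add_mem (hsingle a b) ih

/-- the `K`-linear map `ℕ →₀ K → R`, `e_n ↦ y^n (1 - yx)` -/
def ψ₀ : (ℕ →₀ K) →ₗ[K] Toeplitz K :=
  Finsupp.lift (Toeplitz K) K ℕ (fun n => ty K ^ n * (1 - ty K * tx K))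

lemma ψ₀_single (n : ℕ) (c : K) :
    ψ₀ K (Finsupp.single n c) = c • (ty K ^ n * (1 - ty K * tx K)) := by
  simp [ψ₀, Finsupp.lift_apply, Finsupp.sum_single_index]

lemma tx_mul_e : tx K * (1 - ty K * tx K) = 0 := by
  rw [mul_sub, mul_one, ← mul_assoc, tx_mul_ty, one_mul, sub_self]

lemma ψ₀_tx (v : ℕ →₀ K) : ψ₀ K (tx K • v) = tx K * ψ₀ K v := by
  induction v using Finsupp.induction_linear with
  | zero => simp
  | add f g hf hg => rw [smul_add, map_add, map_add, hf, hg, mul_add]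
  | single a b =>
    rw [tx_smul]
    cases a with
    | zero =>
      rw [Xop_single_zero, map_zero, ψ₀_single, pow_zero, one_mul, mul_smul_comm,
        tx_mul_e, smul_zero]
    | succ m =>
      rw [Xop_single_succ, ψ₀_single, ψ₀_single, mul_smul_comm, ← mul_assoc,
        pow_succ', ← mul_assoc, tx_mul_ty, one_mul]

lemma ψ₀_ty (v : ℕ →₀ K) : ψ₀ K (ty K • v) = ty K * ψ₀ K v := by
  induction v using Finsupp.induction_linear with
  | zero => simp
  | add f g hf hg => rw [smul_add, map_add, map_add, hf, hg, mul_add]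
  | single a b =>
    rw [ty_smul, Yop_single, ψ₀_single, ψ₀_single, mul_smul_comm, ← mul_assoc, ← pow_succ']

lemma ψ₀_smul (r : Toeplitz K) (v : ℕ →₀ K) : ψ₀ K (r • v) = r * ψ₀ K v := by
  obtain ⟨a, rfl⟩ := RingQuot.mkAlgHom_surjective K (ToeplitzRel K) r
  induction a generalizing v with
  | grade0 c =>
    rw [AlgHom.commutes, algebraMap_smul', map_smul, Algebra.smul_def]
  | grade1 i =>
    fin_cases i
    · exact ψ₀_tx K v
    · exact ψ₀_ty K v
  | mul a b ha hb =>
    rw [map_mul, mul_smul, ha, hb, mul_assoc]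
  | add a b ha hb =>
    rw [map_add, add_smul, map_add, ha, hb, add_mul]

/-- the `R`-linear map `ℕ →₀ K → R`, `e_n ↦ y^n (1 - yx)` -/
def ψ : (ℕ →₀ K) →ₗ[Toeplitz K] Toeplitz K where
  toFun := ψ₀ K
  map_add' := (ψ₀ K).map_add
  map_smul' := fun r v => by simpa using ψ₀_smul K r v

lemma ψ_single01 : ψ K (Finsupp.single 0 1) = 1 - ty K * tx K := by
  show ψ₀ K (Finsupp.single 0 1) = _
  rw [ψ₀_single, pow_zero, one_mul, one_smul]

lemma e_ne_zero : (1 : Toeplitz K) - ty K * tx K ≠ 0 := by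
  intro h
  have h2 : ((1 : Toeplitz K) - ty K * tx K) • (Finsupp.single 0 1 : ℕ →₀ K) = 0 := by
    rw [h, zero_smul]
  rw [sub_smul, one_smul, mul_smul, tx_smul, Xop_single_zero, smul_zero, sub_zero] at h2
  exact one_ne_zero (Finsupp.single_eq_zero.mp h2)

lemma ψ_inj : Function.Injective (ψ K) := by
  rw [← LinearMap.ker_eq_bot]
  rcases eq_bot_or_eq_top (LinearMap.ker (ψ K)) with h | h
  · exact h
  · exfalso
    have h2 : ψ K (Finsupp.single 0 1) = 0 := by
      rw [← LinearMap.mem_ker, h]; trivial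
    rw [ψ_single01] at h2
    exact e_ne_zero K h2

lemma ψ_range :
    LinearMap.range (ψ K) = Submodule.span (Toeplitz K) {1 - ty K * tx K} := by
  apply le_antisymm
  · rintro _ ⟨v, rfl⟩
    show ψ₀ K v ∈ _
    induction v using Finsupp.induction_linear with
    | zero => rw [map_zero]; exact Submodule.zero_mem _
    | add f g hf hg => rw [map_add]; exact Submodule.add_mem _ hf hg
    | single n c =>
      rw [ψ₀_single]
      have key : c • (ty K ^ n * (1 - ty K * tx K))
          = (algebraMap K (Toeplitz K) c * ty K ^ n) • (1 - ty K * tx K) := by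
        rw [smul_eq_mul, mul_assoc, Algebra.smul_def]
      rw [key]
      exact Submodule.smul_mem _ _ (Submodule.mem_span_singleton_self _)
  · rw [Submodule.span_le, Set.singleton_subset_iff]
    exact ⟨Finsupp.single 0 1, ψ_single01 K⟩

/-- the simple module `ℕ →₀ K` is isomorphic to the left ideal `S₁ = R(1-yx)`. -/
def eV : (ℕ →₀ K) ≃ₗ[Toeplitz K] Submodule.span (Toeplitz K) {1 - ty K * tx K} :=
  (LinearEquiv.ofInjective (ψ K) (ψ_inj K)).trans (LinearEquiv.ofEq _ _ (ψ_range K))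

instance : IsSimpleModule (Toeplitz K)
    (Submodule.span (Toeplitz K) {1 - ty K * tx K}) :=
  IsSimpleModule.congr (eV K).symm

/-- Every simple left `R`-module is either annihilated by the two-sided ideal
`I = ⟨1-yx⟩` (hence a simple module over `R/I ≅ K[X,X⁻¹]`), or isomorphic to the
left ideal `S₁ = R(1-yx)`. -/
theorem toeplitz_simple_module_classification
    (T : Type*) [AddCommGroup T] [Module (Toeplitz K) T]
    [IsSimpleModule (Toeplitz K) T] :
    (∀ a ∈ TwoSidedIdeal.span {1 - ty K * tx K}, ∀ t : T, a • t = 0) ∨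
    Nonempty (T ≃ₗ[Toeplitz K]
      Submodule.span (Toeplitz K) {1 - ty K * tx K}) := by
  by_cases h : ∀ t : T, (1 - ty K * tx K) • t = 0
  · left
    intro a ha t
    let J : TwoSidedIdeal (Toeplitz K) := TwoSidedIdeal.mk' {a : Toeplitz K | ∀ t : T, a • t = 0}
      (fun t => by rw [zero_smul])
      (fun hx hy t => by rw [add_smul, hx, hy, add_zero])
      (fun hx t => by rw [neg_smul, hx, neg_zero])
      (fun hy t => by rw [mul_smul, hy, smul_zero])
      (fun {x y} hx t => by rw [mul_smul, hx])
    have hJ : a ∈ J := by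
      refine TwoSidedIdeal.mem_span_iff.mp ha J ?_
      rw [Set.singleton_subset_iff]
      show (1 - ty K * tx K) ∈ J
      rw [TwoSidedIdeal.mem_mk']
      exact h
    rw [TwoSidedIdeal.mem_mk'] at hJ
    exact hJ t
  · right
    push_neg at h
    obtain ⟨t, ht⟩ := h
    let φ : Submodule.span (Toeplitz K) {1 - ty K * tx K} →ₗ[Toeplitz K] T :=
      (LinearMap.toSpanSingleton (Toeplitz K) T t).comp
        (Submodule.span (Toeplitz K) {1 - ty K * tx K}).subtype
    have heS : (1 - ty K * tx K) ∈ Submodule.span (Toeplitz K) {1 - ty K * tx K} :=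
      Submodule.mem_span_singleton_self _
    have hφ : φ ⟨_, heS⟩ = (1 - ty K * tx K) • t := rfl
    have hbz := LinearMap.bijective_or_eq_zero (R := Toeplitz K)
      (M := Submodule.span (Toeplitz K) {1 - ty K * tx K}) (N := T) φ
    rcases hbz with hb | hz
    · exact ⟨(LinearEquiv.ofBijective φ hb).symm⟩
    · exfalso
      apply ht
      rw [← hφ, hz, LinearMap.zero_apply]

end
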